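/- Suppose λ_1 ≥ λ_2 ≥ ... ≥ λ_n are real numbers with Σ_{i=1}^n arctan(λ_i) ≥ (n-2)·π/2 + δ for some δ > 0 (n ≥ 2), and suppose λ_n < 0. Then Σ_{i=1}^n 1/λ_i ≤ -tan(δ). -/

import Mathlib

open Real Finset

lemma tan_superadd {a b : ℝ} (ha : 0 ≤ a) (hb : 0 ≤ b) (hab : a + b < π / 2) :
    tan a + tan b ≤ tan (a + b) := by
  have hpi := pi_pos
  have hca : 0 < cos a := cos_pos_of_mem_Ioo ⟨by linarith, by linarith⟩
  have hcb : 0 < cos b := cos_pos_of_mem_Ioo ⟨by linarith, by linarith⟩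
  have hcab : 0 < cos (a + b) := cos_pos_of_mem_Ioo ⟨by linarith, by linarith⟩
  have hsa : 0 ≤ sin a := sin_nonneg_of_nonneg_of_le_pi ha (by linarith)
  have hsb : 0 ≤ sin b := sin_nonneg_of_nonneg_of_le_pi hb (by linarith)
  have hsab : 0 ≤ sin (a + b) := sin_nonneg_of_nonneg_of_le_pi (by linarith) (by linarith)
  rw [tan_eq_sin_div_cos, tan_eq_sin_div_cos, tan_eq_sin_div_cos, div_add_div _ _ hca.ne' hcb.ne',
    div_le_div_iff₀ (by positivity) hcab]
  have h1 : sin a * cos b + cos a * sin b = sin (a + b) := (sin_add a b).symm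
  have h2 : cos (a + b) = cos a * cos b - sin a * sin b := cos_add a b
  nlinarith [mul_nonneg hsa hsb]

lemma sum_tan_le {ι : Type*} (s : Finset ι) (f : ι → ℝ) (h0 : ∀ i ∈ s, 0 ≤ f i)
    (hs : ∑ i ∈ s, f i < π / 2) : ∑ i ∈ s, tan (f i) ≤ tan (∑ i ∈ s, f i) := by
  induction s using Finset.cons_induction with
  | empty => simp
  | cons a t hat ih =>
    rw [Finset.sum_cons] at hs ⊢
    rw [Finset.sum_cons]
    have h0a : 0 ≤ f a := h0 a (Finset.mem_cons_self a t)
    have h0t : ∀ i ∈ t, 0 ≤ f i := fun i hi => h0 i (Finset.mem_cons_of_mem hi)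
    have hts : 0 ≤ ∑ i ∈ t, f i := Finset.sum_nonneg h0t
    have := ih h0t (by linarith)
    have := tan_superadd h0a hts hs
    linarith

theorem supercritical_sum_reciprocals (n : ℕ) (hn : 2 ≤ n) (lam : Fin n → ℝ)
    (hmono : ∀ i j : Fin n, i ≤ j → lam j ≤ lam i) (δ : ℝ) (hδ : 0 < δ)
    (hsum : (n - 2 : ℝ) * (π / 2) + δ ≤ ∑ i, arctan (lam i))
    (hneg : lam ⟨n - 1, by omega⟩ < 0) :
    ∑ i, (lam i)⁻¹ ≤ -tan δ := by
  have hpi := pi_pos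
  set m : Fin n := ⟨n - 1, by omega⟩ with hm
  set θ : Fin n → ℝ := fun i => arctan (lam i) with hθ
  have hθm : θ m < 0 := by
    have : arctan (lam m) < arctan 0 := Real.arctan_strictMono hneg
    rwa [arctan_zero] at this
  have hθub : ∀ i, θ i < π / 2 := fun i => arctan_lt_pi_div_two _
  have hθlb : ∀ i, -(π / 2) < θ i := fun i => neg_pi_div_two_lt_arctan _
  -- every i ≠ m satisfies δ - θ m ≤ θ i
  have hkey : ∀ i : Fin n, i ≠ m → δ - θ m ≤ θ i := by
    intro i him
    have hsplit : ∑ j, θ j = θ i + (θ m + ∑ j ∈ (univ.erase i).erase m, θ j) := by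
      rw [← Finset.add_sum_erase _ θ (Finset.mem_univ i),
        ← Finset.add_sum_erase _ θ (Finset.mem_erase.mpr ⟨him.symm, Finset.mem_univ m⟩)]
    have hcard : ((univ.erase i).erase m).card = n - 2 := by
      rw [Finset.card_erase_of_mem (Finset.mem_erase.mpr ⟨him.symm, Finset.mem_univ m⟩),
        Finset.card_erase_of_mem (Finset.mem_univ i), Finset.card_univ, Fintype.card_fin]
      omega
    have hbound : ∑ j ∈ (univ.erase i).erase m, θ j ≤ (n - 2 : ℝ) * (π / 2) := by
      calc ∑ j ∈ (univ.erase i).erase m, θ j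
          ≤ ((univ.erase i).erase m).card • (π / 2) :=
            Finset.sum_le_card_nsmul _ _ _ (fun j _ => (hθub j).le)
        _ = (n - 2 : ℝ) * (π / 2) := by
            rw [hcard, nsmul_eq_mul, Nat.cast_sub hn]; norm_num
    rw [hsplit] at hsum
    linarith
  have i0 : Fin n := ⟨0, by omega⟩
  have hi0m : (⟨0, by omega⟩ : Fin n) ≠ m := by
    simp only [hm, ne_eq, Fin.mk.injEq]; omega
  have hδlt : δ < π / 2 := by
    have h1 := hkey ⟨0, by omega⟩ hi0m
    have h2 := hθub ⟨0, by omega⟩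
    linarith
  set ψ : ℝ := π / 2 + θ m with hψ
  have hψ0 : 0 < ψ := by have := hθlb m; simp only [hψ]; linarith
  have hψlt : ψ < π / 2 := by simp only [hψ]; linarith
  -- the auxiliary function
  set g : Fin n → ℝ := fun i => if i = m then δ else π / 2 - θ i with hg
  have hg0 : ∀ i ∈ univ, 0 ≤ g i := by
    intro i _
    simp only [hg]
    split
    · exact hδ.le
    · have := hθub i; linarith
  have hgsum : ∑ i, g i ≤ ψ := by
    have hsplit : ∑ i, g i = δ + ∑ i ∈ univ.erase m, (π / 2 - θ i) := by
      rw [← Finset.add_sum_erase _ _ (Finset.mem_univ m)]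
      simp only [hg, if_pos rfl]
      congr 1
      exact Finset.sum_congr rfl (fun i hi => by
        rw [if_neg (Finset.mem_erase.mp hi).1])
    have hcard : (univ.erase m).card = n - 1 := by
      rw [Finset.card_erase_of_mem (Finset.mem_univ m), Finset.card_univ, Fintype.card_fin]
    have hsum2 : ∑ i ∈ univ.erase m, (π / 2 - θ i) = (n - 1 : ℝ) * (π / 2) - (∑ i, θ i - θ m) := by
      rw [Finset.sum_sub_distrib, Finset.sum_const, hcard, nsmul_eq_mul,
        Nat.cast_sub (by omega : 1 ≤ n), Finset.sum_erase_eq_sub (Finset.mem_univ m)]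
      push_cast; ring
    rw [hsplit, hsum2]
    simp only [hψ]
    linarith
  have hgsum' : ∑ i, g i < π / 2 := lt_of_le_of_lt hgsum hψlt
  have hgsum0 : 0 ≤ ∑ i, g i := Finset.sum_nonneg hg0
  have step1 : ∑ i, tan (g i) ≤ tan (∑ i, g i) := sum_tan_le _ _ hg0 hgsum'
  have step2 : tan (∑ i, g i) ≤ tan ψ :=
    strictMonoOn_tan.monotoneOn ⟨by linarith, hgsum'⟩ ⟨lt_trans (by linarith) hψ0, hψlt⟩ hgsum
  -- identify tan (g i)
  have htaninv : ∀ i : Fin n, tan (π / 2 - θ i) = (lam i)⁻¹ := by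
    intro i
    rw [tan_pi_div_two_sub, hθ]
    simp [tan_arctan]
  have htansplit : ∑ i, tan (g i) = tan δ + ∑ i ∈ univ.erase m, (lam i)⁻¹ := by
    rw [← Finset.add_sum_erase _ _ (Finset.mem_univ m)]
    simp only [hg, if_pos rfl]
    congr 1
    exact Finset.sum_congr rfl (fun i hi => by
      rw [if_neg (Finset.mem_erase.mp hi).1, htaninv])
  have hlamm : (lam m)⁻¹ = -tan ψ := by
    have h1 : (lam m)⁻¹ = tan (π / 2 - θ m) := (htaninv m).symm
    rw [h1]
    have : π / 2 - θ m = -(ψ) + π := by simp only [hψ]; ring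
    rw [this, Real.tan_periodic (-ψ), tan_neg]
  have hfinal : ∑ i, (lam i)⁻¹ = (lam m)⁻¹ + ∑ i ∈ univ.erase m, (lam i)⁻¹ :=
    (Finset.add_sum_erase _ _ (Finset.mem_univ m)).symm
  rw [hfinal, hlamm]
  have : ∑ i ∈ univ.erase m, (lam i)⁻¹ ≤ tan ψ - tan δ := by
    have := step1.trans step2
    rw [htansplit] at this
    linarith
  linarith
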